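/- Let f(t) = ∑_{n∈ℤ} a_n t^n be a Laurent polynomial with real coefficients which is positive, i.e., f(z) is a nonnegative real number for every z ∈ ℂ with |z| = 1. Let m ≥ 1 be an integer such that a_n = 0 for every integer n > m divisible by m. If a_m = a_0/2, then f is divisible by t^{-m} + 2 + t^m in the ring ℝ[t, t^{-1}]; if a_m = −a_0/2, then f is divisible by −t^{-m} + 2 − t^m in ℝ[t, t^{-1}]. -/

import Mathlib

open LaurentPolynomial ComplexOrder

/-- The value of a real Laurent polynomial `f = ∑ aₙ tⁿ` at a complex number `z ≠ 0`. -/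
noncomputable def evalCircle (f : LaurentPolynomial ℝ) (z : ℂ) : ℂ :=
  Finsupp.sum (AddMonoidAlgebra.coeff f) fun n c => (c : ℂ) * z ^ n

/-- The coefficient `aₙ` of a real Laurent polynomial `f = ∑ aₙ tⁿ`. -/
def coeffL (f : LaurentPolynomial ℝ) (n : ℤ) : ℝ := (AddMonoidAlgebra.coeff f : ℤ →₀ ℝ) n

noncomputable def evZ (z : ℂˣ) : LaurentPolynomial ℝ →+* ℂ :=
  AddMonoidAlgebra.liftNCRingHom (Complex.ofRealHom)
    ((Units.coeHom ℂ).comp (zpowersHom ℂˣ z)) (fun _ _ => Commute.all _ _)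

lemma evZ_apply (z : ℂˣ) (f : LaurentPolynomial ℝ) : evZ z f = evalCircle f (z : ℂ) := by
  rw [evZ, evalCircle]
  induction f using AddMonoidAlgebra.induction_linear with
  | zero => simp
  | add f g hf hg => rw [map_add, hf, hg, AddMonoidAlgebra.coeff_add, Finsupp.sum_add_index] <;> simp [add_mul]
  | single n c =>
      rw [AddMonoidAlgebra.liftNCRingHom_single, AddMonoidAlgebra.coeff_single,
        Finsupp.sum_single_index (by simp)]
      simp

lemma evZ_T (z : ℂˣ) (n : ℤ) : evZ z (T n) = (z : ℂ) ^ n := by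
  rw [T, evZ, AddMonoidAlgebra.liftNCRingHom_single]
  simp

lemma evZ_toLaurent (z : ℂˣ) (p : Polynomial ℝ) :
    evZ z (p.toLaurent) = Polynomial.eval (z : ℂ) (p.map Complex.ofRealHom) := by
  induction p using Polynomial.induction_on' with
  | add p q hp hq => simp [hp, hq]
  | monomial n a =>
      rw [Polynomial.toLaurent_C_mul_T, ← single_eq_C_mul_T, evZ]
      rw [AddMonoidAlgebra.liftNCRingHom_single]
      simp [zpow_natCast]

lemma circle_infinite : Set.Infinite {z : ℂ | ‖z‖ = 1} := by
  have hinj : Set.InjOn (fun θ : ℝ => Complex.exp (θ * Complex.I)) (Set.Ioo 0 1) := by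
    intro a ha b hb hab
    rw [Complex.exp_eq_exp_iff_exists_int] at hab
    obtain ⟨n, hn⟩ := hab
    have him : a = b + n * (2 * Real.pi) := by
      have := congrArg Complex.im hn
      simpa using this
    have hn0 : n = 0 := by
      by_contra h
      have h1 : (1:ℝ) ≤ |(n:ℝ)| := by
        rcases lt_or_gt_of_ne h with h' | h'
        · rw [abs_of_neg (by exact_mod_cast h' : (n:ℝ) < 0)]
          have : (1:ℤ) ≤ -n := by omega
          exact_mod_cast this
        · rw [abs_of_pos (by exact_mod_cast h' : (0:ℝ) < (n:ℝ))]
          exact_mod_cast h'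
      have : |a - b| = |(n:ℝ)| * (2 * Real.pi) := by
        rw [him, add_sub_cancel_left, abs_mul]
        congr 1
        rw [abs_of_pos (by positivity)]
      have hlt : |a - b| < 1 := by
        rw [abs_sub_lt_iff]
        constructor <;> nlinarith [ha.1, ha.2, hb.1, hb.2]
      nlinarith [Real.pi_gt_three]
    rw [hn0] at him; simpa using him
  have := (Set.Ioo_infinite (by norm_num : (0:ℝ) < 1)).image hinj
  apply this.mono
  rintro z ⟨θ, _, rfl⟩
  simp [Complex.norm_exp]

lemma evalCircle_eq_evZ {z : ℂ} (hz : z ≠ 0) (f : LaurentPolynomial ℝ) :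
    evalCircle f z = evZ (Units.mk0 z hz) f := by rw [evZ_apply]; rfl

lemma eq_zero_of_vanish (f : LaurentPolynomial ℝ)
    (h : ∀ z : ℂ, ‖z‖ = 1 → evalCircle f z = 0) : f = 0 := by
  obtain ⟨N, p, hp⟩ := f.exists_T_pow
  have hz1 : ∀ z : ℂ, ‖z‖ = 1 → z ≠ 0 := by
    intro z hz h0; rw [h0] at hz; simp at hz
  have hpmap : p.map Complex.ofRealHom = 0 := by
    apply Polynomial.eq_zero_of_infinite_isRoot
    apply circle_infinite.mono
    intro z hz
    have hz0 := hz1 z hz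
    have : Polynomial.eval z (p.map Complex.ofRealHom) = evZ (Units.mk0 z hz0) (f * T N) := by
      rw [← hp, evZ_toLaurent]; rfl
    simp only [Set.mem_setOf_eq, Polynomial.IsRoot]
    rw [this, map_mul, ← evalCircle_eq_evZ hz0, h z hz, zero_mul]
  have hp0 : p = 0 := by
    rwa [Polynomial.map_eq_zero_iff Complex.ofReal_injective] at hpmap
  have : f * T (N : ℤ) = 0 := by rw [← hp, hp0, map_zero]
  have h2 : (T ((N:ℤ)) * T (-(N:ℤ)) : LaurentPolynomial ℝ) = 1 := by rw [← T_add, add_neg_cancel]; exact T_zero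
  calc f = f * T (N:ℤ) * T (-(N:ℤ)) := by rw [mul_assoc, h2, mul_one]
  _ = 0 := by rw [this, zero_mul]

lemma evalCircle_conj (f : LaurentPolynomial ℝ) {z : ℂ} (hz : z ≠ 0) :
    (starRingEnd ℂ) (evalCircle f z) = evalCircle f ((starRingEnd ℂ) z) := by
  rw [evalCircle, evalCircle, map_finsuppSum]
  refine Finsupp.sum_congr fun n _ => ?_
  rw [map_mul, map_zpow₀, Complex.conj_ofReal]

lemma evalCircle_invert (f : LaurentPolynomial ℝ) (z : ℂ) :
    evalCircle (invert f) z = evalCircle f z⁻¹ := by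
  have : AddMonoidAlgebra.coeff (invert f) = Finsupp.equivMapDomain (Equiv.neg ℤ) (AddMonoidAlgebra.coeff f) := by
    ext n; simp [invert_apply]
  rw [evalCircle, this, Finsupp.sum_equivMapDomain, evalCircle]
  refine Finsupp.sum_congr fun n _ => ?_
  simp [zpow_neg, inv_zpow]

lemma symm_of_pos (f : LaurentPolynomial ℝ)
    (hpos : ∀ z : ℂ, ‖z‖ = 1 → 0 ≤ evalCircle f z) (n : ℤ) :
    coeffL f (-n) = coeffL f n := by
  have h0 : f - invert f = 0 := by
    apply eq_zero_of_vanish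
    intro z hz
    have hz0 : z ≠ 0 := fun h => by simp [h] at hz
    have hzinv : ‖z⁻¹‖ = 1 := by rw [norm_inv, hz]; norm_num
    have h1 := hpos z hz
    have h2 : (evalCircle f z).im = 0 := by
      rw [Complex.le_def] at h1; exact h1.2.symm
    have h3 : evalCircle f z⁻¹ = evalCircle f z := by
      have : (starRingEnd ℂ) z = z⁻¹ := by
        rw [Complex.inv_def, Complex.normSq_eq_norm_sq, hz]
        simp
      rw [← this, ← evalCircle_conj f hz0, Complex.conj_eq_iff_im.2 h2]
    have : evalCircle (f - invert f) z = evalCircle f z - evalCircle (invert f) z := by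
      rw [evalCircle, evalCircle, evalCircle, AddMonoidAlgebra.coeff_sub]
      exact Finsupp.sum_sub_index (by intros; push_cast [sub_mul]; ring)
    rw [this, evalCircle_invert, h3, sub_self]
  have h1 : (AddMonoidAlgebra.coeff f - AddMonoidAlgebra.coeff (invert f)) n = 0 := by
    rw [← AddMonoidAlgebra.coeff_sub, h0]; rfl
  rw [Finsupp.sub_apply] at h1
  have h2 : AddMonoidAlgebra.coeff (invert f) n = AddMonoidAlgebra.coeff f (-n) := invert_apply f n
  rw [h2, sub_eq_zero] at h1
  exact h1.symm

lemma eval_rep {z : ℂ} (hz : z ≠ 0) (f : LaurentPolynomial ℝ) (N : ℕ) (p : Polynomial ℝ)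
    (hp : Polynomial.toLaurent p = f * T (N : ℤ)) :
    Polynomial.eval z (p.map Complex.ofRealHom) = evalCircle f z * z ^ (N : ℤ) := by
  have := congrArg (evZ (Units.mk0 z hz)) hp
  rw [evZ_toLaurent, map_mul, evZ_T, ← evalCircle_eq_evZ hz] at this
  simpa using this

lemma deriv_vanish (f : LaurentPolynomial ℝ)
    (hpos : ∀ z : ℂ, ‖z‖ = 1 → 0 ≤ evalCircle f z)
    (N : ℕ) (p : Polynomial ℝ) (hp : Polynomial.toLaurent p = f * T (N : ℤ))
    {w : ℂ} (hw : ‖w‖ = 1) (h0 : evalCircle f w = 0) :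
    Polynomial.eval w (p.map Complex.ofRealHom).derivative = 0 := by
  set P := p.map Complex.ofRealHom with hP
  have hw0 : w ≠ 0 := fun h => by simp [h] at hw
  set e : ℝ → ℂ := circleMap 0 1 with he
  have he_abs : ∀ θ, ‖(e θ)‖ = 1 := fun θ => by
    simp [he, circleMap, Complex.norm_exp]
  have he0 : ∀ θ, e θ ≠ 0 := fun θ h => by
    have := he_abs θ; rw [h] at this; simp at this
  -- ψ is the evaluation of f along the circle
  set ψ : ℝ → ℂ := fun θ => Polynomial.eval (e θ) P * (e θ) ^ (-(N:ℤ)) with hψ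
  have hψ_eval : ∀ θ, ψ θ = evalCircle f (e θ) := by
    intro θ
    rw [hψ]
    simp only
    rw [eval_rep (he0 θ) f N p hp, mul_assoc, ← zpow_add₀ (he0 θ)]
    simp
  -- w = e θ₀
  obtain ⟨θ₀, hθ₀⟩ : ∃ θ₀, e θ₀ = w := by
    refine ⟨Complex.arg w, ?_⟩
    simpa [he, circleMap, hw] using Complex.norm_mul_exp_arg_mul_I w
  -- derivative of ψ at θ₀
  have hder : HasDerivAt ψ
      (Polynomial.eval w P.derivative * (e θ₀ * Complex.I) * w ^ (-(N:ℤ))) θ₀ := by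
    have h1 : HasDerivAt e (e θ₀ * Complex.I) θ₀ := by
      simpa [he, circleMap] using hasDerivAt_circleMap 0 1 θ₀
    have h2 : HasDerivAt (fun θ => Polynomial.eval (e θ) P)
        (Polynomial.eval (e θ₀) P.derivative * (e θ₀ * Complex.I)) θ₀ :=
      (P.hasDerivAt (e θ₀)).comp θ₀ h1
    have h3 : HasDerivAt (fun θ => (e θ) ^ (-(N:ℤ)))
        (((-(N:ℤ) : ℤ) : ℂ) * (e θ₀) ^ (-(N:ℤ) - 1) * (e θ₀ * Complex.I)) θ₀ :=
      (hasDerivAt_zpow (-(N:ℤ)) (e θ₀) (Or.inl (he0 θ₀))).comp θ₀ h1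
    have h4 := h2.mul h3
    have hPw : Polynomial.eval (e θ₀) P = 0 := by
      rw [hθ₀, eval_rep hw0 f N p hp, h0, zero_mul]
    rw [hθ₀] at hPw
    refine h4.congr_deriv ?_
    rw [hθ₀, hPw]
    ring
  set D := Polynomial.eval w P.derivative * (e θ₀ * Complex.I) * w ^ (-(N:ℤ)) with hD
  -- real part has a local min at θ₀
  have hre : HasDerivAt (fun θ => (ψ θ).re) D.re θ₀ :=
    Complex.reCLM.hasFDerivAt.comp_hasDerivAt θ₀ hder
  have him : HasDerivAt (fun θ => (ψ θ).im) D.im θ₀ :=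
    Complex.imCLM.hasFDerivAt.comp_hasDerivAt θ₀ hder
  have hmin : IsLocalMin (fun θ => (ψ θ).re) θ₀ := by
    apply Filter.Eventually.of_forall
    intro θ
    have h1 := hpos (e θ) (he_abs θ)
    rw [Complex.le_def] at h1
    have h2 : (ψ θ₀).re = 0 := by rw [hψ_eval, hθ₀, h0]; simp
    show (ψ θ₀).re ≤ (ψ θ).re
    rw [h2, hψ_eval θ]
    simpa using h1.1
  have hDre : D.re = 0 := hmin.hasDerivAt_eq_zero hre
  have hDim : D.im = 0 := by
    have hconst : (fun θ => (ψ θ).im) = fun _ => (0:ℝ) := by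
      funext θ
      have h1 := hpos (e θ) (he_abs θ)
      rw [Complex.le_def] at h1
      rw [hψ_eval]
      simpa using h1.2.symm
    have : HasDerivAt (fun θ => (ψ θ).im) 0 θ₀ := by
      rw [hconst]; exact hasDerivAt_const θ₀ 0
    exact him.unique this
  have hD0 : D = 0 := Complex.ext hDre hDim
  rw [hD, hθ₀] at hD0
  have hwz : w ^ (-(N:ℤ)) ≠ 0 := zpow_ne_zero _ hw0
  have := mul_eq_zero.1 hD0
  rcases this with h | h
  · rcases mul_eq_zero.1 h with h' | h'
    · exact h'
    · exact absurd h' (mul_ne_zero hw0 Complex.I_ne_zero)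
  · exact absurd h hwz

lemma sum_zeta_pow {m : ℕ} (hm : 1 ≤ m) {ζ : ℂ} (hζ : IsPrimitiveRoot ζ m) (n : ℤ) :
    ∑ k ∈ Finset.range m, ((ζ ^ k : ℂ)) ^ n = if (m:ℤ) ∣ n then (m:ℂ) else 0 := by
  have hrw : ∀ k ∈ Finset.range m, ((ζ ^ k : ℂ)) ^ n = (ζ ^ n) ^ k := by
    intro k _
    rw [← zpow_natCast ζ k, ← zpow_mul, mul_comm, zpow_mul, zpow_natCast]
  rw [Finset.sum_congr rfl hrw]
  by_cases hdvd : (m:ℤ) ∣ n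
  · rw [if_pos hdvd]
    have : ζ ^ n = 1 := (hζ.zpow_eq_one_iff_dvd n).2 hdvd
    simp [this]
  · rw [if_neg hdvd]
    have hx1 : ζ ^ n ≠ 1 := fun h => hdvd ((hζ.zpow_eq_one_iff_dvd n).1 h)
    have hxm : (ζ ^ n) ^ m = 1 := by
      rw [← zpow_natCast, ← zpow_mul, mul_comm, zpow_mul, zpow_natCast, hζ.pow_eq_one]
      simp
    rw [geom_sum_eq hx1, hxm, sub_self, zero_div]

lemma eval_zero_at_root (f : LaurentPolynomial ℝ)
    (hpos : ∀ z : ℂ, ‖z‖ = 1 → 0 ≤ evalCircle f z)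
    {m : ℕ} (hm : 1 ≤ m)
    (hvan : ∀ n : ℤ, (m : ℤ) < n → (m : ℤ) ∣ n → coeffL f n = 0)
    {c : ℝ} (hc : c = 1 ∨ c = -1)
    (hcoeff : coeffL f 0 + 2 * c * coeffL f m = 0)
    {w : ℂ} (hw : ‖w‖ = 1) (hwm : w ^ m = (c:ℂ)) :
    evalCircle f w = 0 := by
  have hm0 : m ≠ 0 := by omega
  have hw0 : w ≠ 0 := fun h => by simp [h] at hw
  obtain ⟨ζ, hζ⟩ : ∃ ζ : ℂ, IsPrimitiveRoot ζ m :=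
    ⟨_, Complex.isPrimitiveRoot_exp m hm0⟩
  have hζ1 : ‖ζ‖ = 1 :=
    Complex.norm_eq_one_of_pow_eq_one hζ.pow_eq_one hm0
  have habs : ∀ k : ℕ, ‖(ζ ^ k * w)‖ = 1 := by
    intro k; rw [norm_mul, norm_pow, hζ1, hw, one_pow, one_mul]
  have hζ0 : ∀ k : ℕ, (ζ ^ k : ℂ) ≠ 0 := fun k =>
    pow_ne_zero _ (fun h => by simp [h] at hζ1)
  -- the averaged sum
  have hsum : ∑ k ∈ Finset.range m, evalCircle f (ζ ^ k * w)
      = Finsupp.sum (AddMonoidAlgebra.coeff f) fun n a => (a:ℂ) * w ^ n * (if (m:ℤ) ∣ n then (m:ℂ) else 0) := by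
    have : ∀ k ∈ Finset.range m, evalCircle f (ζ ^ k * w)
        = ∑ n ∈ (AddMonoidAlgebra.coeff f).support, (AddMonoidAlgebra.coeff f n : ℂ) * ((ζ ^ k : ℂ)) ^ n * w ^ n := by
      intro k _
      rw [evalCircle, Finsupp.sum]
      refine Finset.sum_congr rfl fun n _ => ?_
      rw [mul_zpow]; ring
    rw [Finset.sum_congr rfl this, Finset.sum_comm, Finsupp.sum]
    refine Finset.sum_congr rfl fun n _ => ?_
    rw [← sum_zeta_pow hm hζ n, Finset.mul_sum]
    refine Finset.sum_congr rfl fun k _ => ?_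
    ring
  -- compute the right-hand side
  have hcc : (c:ℂ) * c = 1 := by
    rcases hc with h | h <;> simp [h]
  have hwneg : w ^ (-(m:ℤ)) = (c:ℂ) := by
    rw [zpow_neg, zpow_natCast, hwm]
    field_simp [hcc]
    rcases hc with h | h <;> norm_num [h]
  have hsymm := symm_of_pos f hpos
  have hrhs : (Finsupp.sum (AddMonoidAlgebra.coeff f) fun n a => (a:ℂ) * w ^ n * (if (m:ℤ) ∣ n then (m:ℂ) else 0)) = 0 := by
    classical
    set g : ℤ → ℝ → ℂ := fun n a => (a:ℂ) * w ^ n * (if (m:ℤ) ∣ n then (m:ℂ) else 0) with hg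
    have hg0 : ∀ n, g n 0 = 0 := by intro n; simp [hg]
    have hT : ({-(m:ℤ), 0, (m:ℤ)} : Finset ℤ) ⊆ (AddMonoidAlgebra.coeff f).support ∪ {-(m:ℤ), 0, (m:ℤ)} :=
      Finset.subset_union_right
    have hS : (AddMonoidAlgebra.coeff f).support ⊆ (AddMonoidAlgebra.coeff f).support ∪ {-(m:ℤ), 0, (m:ℤ)} := Finset.subset_union_left
    have e1 : Finsupp.sum (AddMonoidAlgebra.coeff f) g = ∑ n ∈ (AddMonoidAlgebra.coeff f).support ∪ {-(m:ℤ), 0, (m:ℤ)}, g n (AddMonoidAlgebra.coeff f n) := by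
      rw [Finsupp.sum]
      refine Finset.sum_subset hS fun n _ hn => ?_
      rw [Finsupp.notMem_support_iff.1 hn, hg0]
    have e2 : ∑ n ∈ (AddMonoidAlgebra.coeff f).support ∪ {-(m:ℤ), 0, (m:ℤ)}, g n (AddMonoidAlgebra.coeff f n)
        = ∑ n ∈ ({-(m:ℤ), 0, (m:ℤ)} : Finset ℤ), g n (AddMonoidAlgebra.coeff f n) := by
      symm
      refine Finset.sum_subset hT fun n _ hn => ?_
      simp only [Finset.mem_insert, Finset.mem_singleton] at hn
      push_neg at hn
      by_cases hdvd : (m:ℤ) ∣ n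
      · have hfn : AddMonoidAlgebra.coeff f n = 0 := by
          have hm1 : (1:ℤ) ≤ (m:ℤ) := by exact_mod_cast hm
          rcases lt_trichotomy n 0 with hlt | heq | hgt
          · have hneg : coeffL f (-n) = 0 := by
              apply hvan _ _ ((dvd_neg).2 hdvd)
              obtain ⟨q, rfl⟩ := hdvd
              have hq0 : q < 0 := by nlinarith
              rcases (by omega : q = -1 ∨ q ≤ -2) with h | h
              · exfalso; apply hn.1; rw [h]; ring
              · nlinarith
            have : coeffL f n = coeffL f (-n) := by
              have := hsymm (-n); simpa using this
            have h2 : coeffL f n = 0 := by rw [this, hneg]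
            exact h2
          · exact absurd heq hn.2.1
          · apply hvan _ _ hdvd
            obtain ⟨q, rfl⟩ := hdvd
            have hq : 1 ≤ q := by nlinarith
            rcases (by omega : q = 1 ∨ 2 ≤ q) with h | h
            · exfalso; apply hn.2.2; rw [h]; ring
            · nlinarith
        rw [hfn, hg0]
      · simp [hg, hdvd]
    have hne1 : (-(m:ℤ)) ≠ 0 := by omega
    have hne2 : (-(m:ℤ)) ≠ (m:ℤ) := by omega
    have hne3 : (0:ℤ) ≠ (m:ℤ) := by exact_mod_cast fun h => hm0 (by exact_mod_cast h.symm)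
    rw [e1, e2, Finset.sum_insert (by simp [hne1, hne2]),
      Finset.sum_insert (by simp [hne3]), Finset.sum_singleton]
    have d1 : (m:ℤ) ∣ -(m:ℤ) := ⟨-1, by ring⟩
    have d2 : (m:ℤ) ∣ (0:ℤ) := dvd_zero _
    have d3 : (m:ℤ) ∣ (m:ℤ) := dvd_refl _
    rw [hg]
    simp only [if_pos d1, if_pos d2, if_pos d3]
    rw [hwneg]
    have hw_m : w ^ (m:ℤ) = (c:ℂ) := by rw [zpow_natCast, hwm]
    rw [hw_m, zpow_zero]
    have hsmC : ((AddMonoidAlgebra.coeff f (-(m:ℤ)) : ℝ) : ℂ) = ((AddMonoidAlgebra.coeff f (m:ℤ) : ℝ) : ℂ) := by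
      exact_mod_cast congrArg (fun x : ℝ => (x : ℂ)) (hsymm m)
    have key : (AddMonoidAlgebra.coeff f 0 : ℝ) + 2 * c * (AddMonoidAlgebra.coeff f (m:ℤ) : ℝ) = 0 := hcoeff
    have keyC : ((AddMonoidAlgebra.coeff f 0 : ℝ) : ℂ) + 2 * (c:ℂ) * ((AddMonoidAlgebra.coeff f (m:ℤ) : ℝ) : ℂ) = 0 := by
      exact_mod_cast congrArg (fun x : ℝ => (x : ℂ)) key
    linear_combination (m:ℂ) * keyC + (c:ℂ) * (m:ℂ) * hsmC - (c:ℂ) * (m:ℂ) * hsmC + (m:ℂ) * (c:ℂ) * hsmC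
  -- each term nonnegative, total zero
  rw [hrhs] at hsum
  have hterm : ∀ k ∈ Finset.range m, evalCircle f (ζ ^ k * w) = 0 := by
    intro k hk
    have := (Finset.sum_eq_zero_iff_of_nonneg
      (fun k _ => hpos _ (habs k))).1 hsum
    exact this k hk
  have h0 := hterm 0 (Finset.mem_range.2 (by omega))
  simpa using h0

lemma sq_dvd_complex {m : ℕ} (hm : 1 ≤ m) (c : ℂ) (hc0 : c ≠ 0) (hmc : (m : ℂ) ≠ 0)
    (P : Polynomial ℂ)
    (hroot : ∀ w : ℂ, w ^ m = c → Polynomial.eval w P = 0 ∧ Polynomial.eval w P.derivative = 0) :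
    (Polynomial.X ^ m - Polynomial.C c) ^ 2 ∣ P := by
  set q : Polynomial ℂ := Polynomial.X ^ m - Polynomial.C c with hq
  have hmonic : q.Monic := Polynomial.monic_X_pow_sub_C c (by omega)
  have hq0 : q ≠ 0 := hmonic.ne_zero
  have hsep : q.Separable := Polynomial.separable_X_pow_sub_C c hmc hc0
  have hnodup : q.roots.Nodup := Polynomial.nodup_roots hsep
  have hmemroots : ∀ r ∈ q.roots.toFinset, r ^ m = c := by
    intro r hr
    rw [Multiset.mem_toFinset, Polynomial.mem_roots hq0] at hr
    have := hr
    rw [Polynomial.IsRoot, hq] at this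
    simp only [Polynomial.eval_sub, Polynomial.eval_pow, Polynomial.eval_X,
      Polynomial.eval_C, sub_eq_zero] at this
    exact this
  -- q is the product of (X - r) over its roots
  have hqprod : q = (q.roots.map fun r => Polynomial.X - Polynomial.C r).prod := by
    conv_lhs => rw [(IsAlgClosed.splits q).eq_prod_roots_of_monic hmonic]
  have hval : (q.roots.toFinset).val = q.roots := by
    rw [Multiset.toFinset_val, Multiset.dedup_eq_self.2 hnodup]
  have hqprod' : q = ∏ r ∈ q.roots.toFinset, (Polynomial.X - Polynomial.C r) := by
    rw [Finset.prod_eq_multiset_prod, hval]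
    exact hqprod
  have hpair : (q.roots.toFinset : Set ℂ).Pairwise (Function.onFun IsCoprime fun r => Polynomial.X - Polynomial.C r) := by
    intro a _ b _ hab
    exact Polynomial.pairwise_coprime_X_sub_C Function.injective_id hab
  -- q divides any polynomial vanishing on all roots of q
  have hdvd_aux : ∀ Q : Polynomial ℂ, (∀ w : ℂ, w ^ m = c → Polynomial.eval w Q = 0) → q ∣ Q := by
    intro Q hQ
    rw [hqprod']
    refine Finset.prod_dvd_of_coprime hpair fun r hr => ?_
    exact Polynomial.dvd_iff_isRoot.2 (hQ r (hmemroots r hr))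
  have h1 : q ∣ P := hdvd_aux P fun w hw => (hroot w hw).1
  have h2 : q ∣ P.derivative := hdvd_aux P.derivative fun w hw => (hroot w hw).2
  obtain ⟨s, hs⟩ := h1
  have h3 : q ∣ q.derivative * s := by
    have : P.derivative = q.derivative * s + q * s.derivative := by
      rw [hs, Polynomial.derivative_mul]
    rw [this] at h2
    exact (dvd_add_left (dvd_mul_right q _)).1 h2
  have h4 : q ∣ s := hsep.dvd_of_dvd_mul_left h3
  obtain ⟨t, ht⟩ := h4
  exact ⟨t, by rw [hs, ht]; ring⟩

lemma main_dvd (f : LaurentPolynomial ℝ)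
    (hpos : ∀ z : ℂ, ‖z‖ = 1 → 0 ≤ evalCircle f z)
    {m : ℕ} (hm : 1 ≤ m)
    (hvan : ∀ n : ℤ, (m : ℤ) < n → (m : ℤ) ∣ n → coeffL f n = 0)
    {c : ℝ} (hc : c = 1 ∨ c = -1)
    (hcoeff : coeffL f 0 + 2 * c * coeffL f m = 0) :
    Polynomial.toLaurent ((Polynomial.X ^ m - Polynomial.C c) ^ 2) ∣ f := by
  obtain ⟨N, p, hp⟩ := f.exists_T_pow
  have hc0 : (c:ℂ) ≠ 0 := by rcases hc with h | h <;> simp [h]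
  have hmc : ((m:ℕ) : ℂ) ≠ 0 := by
    simp only [ne_eq, Nat.cast_eq_zero]; omega
  have hcc : (c:ℂ) * (c:ℂ) = 1 := by
    rcases hc with h | h <;> norm_num [h]
  have key : ((Polynomial.X ^ m - Polynomial.C (c:ℂ)) ^ 2 : Polynomial ℂ)
      ∣ p.map Complex.ofRealHom := by
    apply sq_dvd_complex hm (c:ℂ) hc0 hmc
    intro w hw
    have hw2m : w ^ (2 * m) = 1 := by
      rw [two_mul, pow_add, hw, hcc]
    have habs : ‖w‖ = 1 :=
      Complex.norm_eq_one_of_pow_eq_one hw2m (by omega)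
    have hw0 : w ≠ 0 := fun h => by simp [h] at habs
    have h0 : evalCircle f w = 0 :=
      eval_zero_at_root f hpos hm hvan hc hcoeff habs hw
    constructor
    · rw [eval_rep hw0 f N p hp, h0, zero_mul]
    · exact deriv_vanish f hpos N p hp habs h0
  have hreal : ((Polynomial.X ^ m - Polynomial.C c) ^ 2 : Polynomial ℝ) ∣ p := by
    rw [← Polynomial.map_dvd_map' Complex.ofRealHom]
    convert key using 2
    simp [Polynomial.map_pow, Polynomial.map_sub, Polynomial.map_C, Polynomial.map_X]
  obtain ⟨s, hs⟩ := hreal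
  refine ⟨Polynomial.toLaurent s * T (-(N:ℤ)), ?_⟩
  have hf : f = Polynomial.toLaurent p * T (-(N:ℤ)) := by
    rw [hp, mul_T_assoc]
    simp [T_zero]
  rw [hf, hs, map_mul, mul_assoc]

/-- Proposition 5.2 (ii) and (iii): if the Laurent polynomial `f = ∑ aₙ tⁿ` is positive
on the unit circle and `aₙ = 0` for every `n > m` divisible by `m`, then: if
`aₘ = a₀/2` then `t⁻ᵐ + 2 + tᵐ` divides `f` in `ℝ[t, t⁻¹]`, and if `aₘ = -a₀/2` then
`-t⁻ᵐ + 2 - tᵐ` divides `f` in `ℝ[t, t⁻¹]`. -/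
theorem stmt_9 (f : LaurentPolynomial ℝ)
    (hpos : ∀ z : ℂ, ‖z‖ = 1 → 0 ≤ evalCircle f z)
    (m : ℕ) (hm : 1 ≤ m)
    (hvan : ∀ n : ℤ, (m : ℤ) < n → (m : ℤ) ∣ n → coeffL f n = 0) :
    (coeffL f m = coeffL f 0 / 2 →
      (T (-(m : ℤ)) + 2 + T (m : ℤ)) ∣ f) ∧
    (coeffL f m = -(coeffL f 0) / 2 →
      (-T (-(m : ℤ)) + 2 - T (m : ℤ)) ∣ f) := by
  have hTT : T (m:ℤ) * T (-(m:ℤ)) = (1 : LaurentPolynomial ℝ) := by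
    rw [← T_add, add_neg_cancel]; exact T_zero
  have hTT' : T (-(m:ℤ)) * T (m:ℤ) = (1 : LaurentPolynomial ℝ) := by
    rw [← T_add, neg_add_cancel]; exact T_zero
  constructor
  · intro hcoeff
    obtain ⟨u, hu⟩ := main_dvd f hpos hm hvan (Or.inr rfl : (-1:ℝ) = 1 ∨ (-1:ℝ) = -1)
      (by rw [hcoeff]; ring)
    have e1 : Polynomial.toLaurent ((Polynomial.X ^ m - Polynomial.C (-1:ℝ)) ^ 2)
        = (T (m:ℤ) + 1) ^ 2 := by
      rw [map_pow, map_sub, Polynomial.toLaurent_X_pow, Polynomial.toLaurent_C]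
      congr 1
      simp
    have e2 : (T (-(m:ℤ)) + 2 + T (m:ℤ) : LaurentPolynomial ℝ)
        = (T (m:ℤ) + 1) ^ 2 * T (-(m:ℤ)) := by
      calc (T (-(m:ℤ)) + 2 + T (m:ℤ) : LaurentPolynomial ℝ)
          = T (m:ℤ) * 1 + 2 * 1 + T (-(m:ℤ)) := by ring
        _ = T (m:ℤ) * (T (m:ℤ) * T (-(m:ℤ))) + 2 * (T (m:ℤ) * T (-(m:ℤ))) + T (-(m:ℤ)) := by
            rw [hTT]
        _ = (T (m:ℤ) + 1) ^ 2 * T (-(m:ℤ)) := by ring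
    refine ⟨T (m:ℤ) * u, ?_⟩
    rw [e2, hu, e1]
    have : (T (m:ℤ) + 1) ^ 2 * T (-(m:ℤ)) * (T (m:ℤ) * u)
        = (T (m:ℤ) + 1) ^ 2 * (T (-(m:ℤ)) * T (m:ℤ)) * u := by ring
    rw [this, hTT', mul_one]
  · intro hcoeff
    obtain ⟨u, hu⟩ := main_dvd f hpos hm hvan (Or.inl rfl : (1:ℝ) = 1 ∨ (1:ℝ) = -1)
      (by rw [hcoeff]; ring)
    have e1 : Polynomial.toLaurent ((Polynomial.X ^ m - Polynomial.C (1:ℝ)) ^ 2)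
        = (T (m:ℤ) - 1) ^ 2 := by
      rw [map_pow, map_sub, Polynomial.toLaurent_X_pow, Polynomial.toLaurent_C]
      congr 1
    have e2 : (-T (-(m:ℤ)) + 2 - T (m:ℤ) : LaurentPolynomial ℝ)
        = (T (m:ℤ) - 1) ^ 2 * (-T (-(m:ℤ))) := by
      calc (-T (-(m:ℤ)) + 2 - T (m:ℤ) : LaurentPolynomial ℝ)
          = -(T (m:ℤ) * 1) + 2 * 1 - T (-(m:ℤ)) := by ring
        _ = -(T (m:ℤ) * (T (m:ℤ) * T (-(m:ℤ)))) + 2 * (T (m:ℤ) * T (-(m:ℤ))) - T (-(m:ℤ)) := by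
            rw [hTT]
        _ = (T (m:ℤ) - 1) ^ 2 * (-T (-(m:ℤ))) := by ring
    refine ⟨-T (m:ℤ) * u, ?_⟩
    rw [e2, hu, e1]
    have : (T (m:ℤ) - 1) ^ 2 * (-T (-(m:ℤ))) * (-T (m:ℤ) * u)
        = (T (m:ℤ) - 1) ^ 2 * (T (-(m:ℤ)) * T (m:ℤ)) * u := by ring
    rw [this, hTT', mul_one]
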